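/- Consider the same recursive size definitions. For the burst X[i],...,X[i+b−1], the parity symbols strictly before time i+τ satisfy Σ_{j=i+b}^{i+τ−1} |P'[j]| ≥ Σ_{j=i}^{i+b−1} |V[j]|, where |P'[j]| = |P[j]| for j < i+τ. Equivalently, subtracting |P'[j]| = |U[j−τ]| for j ∈ {i+τ,...,i+τ+b−1} from the inequality Σ_{j=i+b}^{i+τ+b−1} |P'[j]| ≥ Σ_{j=i}^{i+b−1} k_j yields the claim. -/
import Mathlib


/-- Size of the parity block `P[i]` of the `(τ,b)`-Variable-sized Generalized MS Code. -/
noncomputable def Psize (τ b : ℕ) (k : ℕ → ℤ) : ℕ → ℤ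
  | i =>
    if i < τ then 0
    else if i < τ + b then k (i - τ)
    else
      k (i - τ) - min (k (i - τ))
        (sInf ((fun j : ℕ =>
          (∑ l ∈ (Finset.Ico (j + b) i).attach, Psize τ b k l.1) -
            ∑ l ∈ Finset.Icc j (i - τ - 1), k l) '' Set.Icc (i - τ - b + 1) (i - τ)))
  termination_by i => i
  decreasing_by exact (Finset.mem_Ico.mp l.2).2

/-- `z_i = min_{j ∈ {i−b+1,…,i}} (Σ_{l=j+b}^{i+τ−1} |P[l]| − Σ_{l=j}^{i−1} k_l)`. -/
noncomputable def zfun (τ b : ℕ) (k : ℕ → ℤ) (i : ℕ) : ℤ :=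
  sInf ((fun j : ℕ =>
    (∑ l ∈ Finset.Ico (j + b) (i + τ), Psize τ b k l) -
      ∑ l ∈ Finset.Icc j (i - 1), k l) '' Set.Icc (i - b + 1) i)

/-- `|V[i]| = 0` for `i < b` and `|V[i]| = min(k_i, z_i)` for `i ≥ b`. -/
noncomputable def Vsize (τ b : ℕ) (k : ℕ → ℤ) (i : ℕ) : ℤ :=
  if i < b then 0 else min (k i) (zfun τ b k i)

/-- `|U[i]| = k_i − |V[i]|`. -/
noncomputable def Usize (τ b : ℕ) (k : ℕ → ℤ) (i : ℕ) : ℤ :=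
  k i - Vsize τ b k i

lemma Psize_nonneg (τ b : ℕ) (k : ℕ → ℤ) (hk : ∀ l, 0 ≤ k l) (i : ℕ) :
    0 ≤ Psize τ b k i := by
  rw [Psize]
  split
  · exact le_refl 0
  · split
    · exact hk _
    · simp [min_le_left]

lemma Vsize_le (τ b : ℕ) (k : ℕ → ℤ) (hk : ∀ l, 0 ≤ k l) (i : ℕ) :
    Vsize τ b k i ≤ k i := by
  rw [Vsize]; split
  · exact hk i
  · exact min_le_left _ _

lemma Psize_eq (τ b : ℕ) (k : ℕ → ℤ) (hb : 1 ≤ b) (i : ℕ) (hi : τ ≤ i) :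
    Psize τ b k i = k (i - τ) - Vsize τ b k (i - τ) := by
  rw [Psize]
  rw [if_neg (by omega)]
  split
  · rename_i h
    rw [Vsize, if_pos (by omega), sub_zero]
  · rename_i h
    rw [Vsize, if_neg (by omega)]
    congr 2
    rw [zfun]
    congr 1
    ext x
    simp only [Finset.sum_attach (Finset.Ico _ i) (fun l => Psize τ b k l)]
    rw [Nat.sub_add_cancel hi]

lemma zfun_le (τ b : ℕ) (k : ℕ → ℤ) (i j : ℕ) (hj : j ∈ Set.Icc (i - b + 1) i) :
    zfun τ b k i ≤
      (∑ l ∈ Finset.Ico (j + b) (i + τ), Psize τ b k l) -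
        ∑ l ∈ Finset.Icc j (i - 1), k l := by
  apply csInf_le
  · exact ((Set.finite_Icc _ _).image _).bddBelow
  · exact Set.mem_image_of_mem _ hj

/-- for the burst `X[i],…,X[i+b−1]`, the parity strictly before time
`i+τ` covers the lost `V`-parts: `Σ_{j=i+b}^{i+τ−1} |P[j]| ≥ Σ_{j=i}^{i+b−1} |V[j]|`. -/
theorem stmt12 (τ b : ℕ) (k : ℕ → ℤ) (hb : 1 ≤ b) (hbτ : b ≤ τ) (hk : ∀ l, 0 ≤ k l)
    (i : ℕ) :
    ∑ j ∈ Finset.Icc i (i + b - 1), Vsize τ b k j ≤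
      ∑ j ∈ Finset.Icc (i + b) (i + τ - 1), Psize τ b k j := by
  rcases Nat.eq_zero_or_pos i with rfl | hi
  · have h1 : ∀ j ∈ Finset.Icc 0 (0 + b - 1), Vsize τ b k j = 0 := by
      intro j hj
      simp only [Finset.mem_Icc] at hj
      rw [Vsize, if_pos (by omega)]
    rw [Finset.sum_congr rfl h1, Finset.sum_const, smul_zero]
    exact Finset.sum_nonneg fun j _ => Psize_nonneg τ b k hk j
  -- main case i ≥ 1
  have hV : Vsize τ b k (i + b - 1) ≤ zfun τ b k (i + b - 1) := by
    rw [Vsize, if_neg (by omega)]; exact min_le_right _ _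
  have hz := zfun_le τ b k (i + b - 1) i (by constructor <;> omega)
  -- rewrite index arithmetic
  have e1 : i + b - 1 + τ = i + τ + b - 1 := by omega
  have e2 : i + b - 1 - 1 = i + b - 2 := by omega
  rw [e1, e2] at hz
  -- split the P-sum
  have esplit : ∑ l ∈ Finset.Ico (i + b) (i + τ + b - 1), Psize τ b k l =
      (∑ l ∈ Finset.Ico (i + b) (i + τ), Psize τ b k l) +
        ∑ l ∈ Finset.Ico (i + τ) (i + τ + b - 1), Psize τ b k l := by
    rw [Finset.sum_Ico_consecutive _ (by omega) (by omega)]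
  -- reindex the second sum
  have ereindex : ∑ l ∈ Finset.Ico (i + τ) (i + τ + b - 1), Psize τ b k l =
      ∑ j ∈ Finset.Ico i (i + b - 1), (k j - Vsize τ b k j) := by
    have : Finset.Ico (i + τ) (i + τ + b - 1) =
        (Finset.Ico i (i + b - 1)).map (addLeftEmbedding τ) := by
      rw [Finset.map_add_left_Ico]
      congr 1 <;> omega
    rw [this, Finset.sum_map]
    apply Finset.sum_congr rfl
    intro j hj
    simp only [addLeftEmbedding_apply]
    rw [Psize_eq τ b k hb (τ + j) (by omega)]
    congr <;> omega
  -- Icc i (i+b-2) = Ico i (i+b-1)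
  have eIcc : Finset.Icc i (i + b - 2) = Finset.Ico i (i + b - 1) := by
    rw [show i + b - 1 = (i + b - 2) + 1 by omega, Finset.Ico_add_one_right_eq_Icc]
  rw [eIcc] at hz
  rw [Finset.sum_sub_distrib] at ereindex
  -- rewrite goal RHS as Ico
  rw [show Finset.Icc (i + b) (i + τ - 1) = Finset.Ico (i + b) (i + τ) by
      rw [show i + τ = (i + τ - 1) + 1 by omega, Finset.Ico_add_one_right_eq_Icc]
      congr 1]
  -- split goal LHS
  rw [show Finset.Icc i (i + b - 1) = Finset.Ico i ((i + b - 1) + 1) by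
      rw [Finset.Ico_add_one_right_eq_Icc],
    Finset.sum_Ico_succ_top (by omega : i ≤ i + b - 1)]
  have hVk : ∑ j ∈ Finset.Ico i (i + b - 1), Vsize τ b k j ≤
      ∑ j ∈ Finset.Ico i (i + b - 1), k j :=
    Finset.sum_le_sum fun j _ => Vsize_le τ b k hk j
  linarith
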